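/- arXiv:1606.01024 — 2 statements merged into one kernel-verified Lean document; each statement's English description precedes it below -/
import Mathlib

section
/- In the setting of the weighted composition semigroup T on L^p_ρ(Ω), T is stable if and only if the functions ρ_{t,p}/ρ converge to 0 as t → ∞ in the weak-* topology of L^∞ induced by the pairing with L^1 with respect to the measure ρ dλ; equivalently, lim_{t→∞} ∫_Ω |g| ρ_{t,p} dλ = 0 for every g ∈ L^1_ρ(Ω). -/
open MeasureTheory Filter Topology

/-- The cocycle h_t(x) = exp(∫₀^t h(φ(s,x)) ds). -/
noncomputable def cocycle {E : Type*} (h : E → ℝ) (φ : ℝ → E → E) (t : ℝ) (x : E) : ℝ :=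
  Real.exp (∫ s in (0:ℝ)..t, h (φ s x))

/-- The function ρ_{t,p} = χ_{φ(t,Ω)} |h_t(φ(−t,·))|^p ρ(φ(−t,·)) |det Dφ(−t,·)|. -/
noncomputable def rhotp {N : ℕ} (Ω : Set (EuclideanSpace ℝ (Fin N)))
    (h : EuclideanSpace ℝ (Fin N) → ℝ)
    (φ φinv : ℝ → EuclideanSpace ℝ (Fin N) → EuclideanSpace ℝ (Fin N))
    (ρ : EuclideanSpace ℝ (Fin N) → ℝ) (p t : ℝ) :
    EuclideanSpace ℝ (Fin N) → ℝ :=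
  (φ t '' Ω).indicator fun y =>
    |cocycle h φ t (φinv t y)| ^ p * ρ (φinv t y) * |(fderiv ℝ (φinv t) y).det|

lemma det_fderiv_inv {N : ℕ} {Ω : Set (EuclideanSpace ℝ (Fin N))} (hΩ : IsOpen Ω)
    {φt φinvt : EuclideanSpace ℝ (Fin N) → EuclideanSpace ℝ (Fin N)}
    (hC1 : ContDiffOn ℝ 1 φt Ω) (hinv : ∀ x ∈ Ω, φinvt (φt x) = x)
    {x : EuclideanSpace ℝ (Fin N)} (hx : x ∈ Ω)
    (hdet : (fderiv ℝ φt x).det ≠ 0) :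
    |(fderiv ℝ φinvt (φt x)).det| = |(fderiv ℝ φt x).det|⁻¹ := by
  set A := fderiv ℝ φt x with hA
  set e := A.toContinuousLinearEquivOfDetNeZero hdet with he
  have hcoe : (e : EuclideanSpace ℝ (Fin N) →L[ℝ] EuclideanSpace ℝ (Fin N)) = A :=
    A.coe_toContinuousLinearEquivOfDetNeZero hdet
  have hstrict : HasStrictFDerivAt φt
      (e : EuclideanSpace ℝ (Fin N) →L[ℝ] EuclideanSpace ℝ (Fin N)) x := by
    rw [hcoe]
    exact (hC1.contDiffAt (hΩ.mem_nhds hx)).hasStrictFDerivAt one_ne_zero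
  have hg : ∀ᶠ x' in 𝓝 x, φinvt (φt x') = x' :=
    Filter.eventually_of_mem (hΩ.mem_nhds hx) hinv
  have heq : φinvt =ᶠ[𝓝 (φt x)] hstrict.localInverse φt e x :=
    hstrict.localInverse_unique hg
  have hfd : fderiv ℝ φinvt (φt x) =
      (e.symm : EuclideanSpace ℝ (Fin N) →L[ℝ] EuclideanSpace ℝ (Fin N)) := by
    rw [heq.fderiv_eq]
    exact hstrict.to_localInverse.hasFDerivAt.fderiv
  rw [hfd, ContinuousLinearEquiv.det_coe_symm, hcoe, abs_inv]

lemma cov {N : ℕ} {Ω : Set (EuclideanSpace ℝ (Fin N))} (hΩ : IsOpen Ω)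
    {p : ℝ}
    {φ φinv : ℝ → EuclideanSpace ℝ (Fin N) → EuclideanSpace ℝ (Fin N)}
    {h : EuclideanSpace ℝ (Fin N) → ℝ} {ρ : EuclideanSpace ℝ (Fin N) → ℝ}
    {t : ℝ}
    (hmaps : ∀ x ∈ Ω, φ t x ∈ Ω)
    (hinj : Set.InjOn (φ t) Ω)
    (hC1 : ContDiffOn ℝ 1 (φ t) Ω)
    (hinvt : ∀ x ∈ Ω, φinv t (φ t x) = x)
    (hdetae : ∀ᵐ x ∂(volume.restrict Ω), (fderiv ℝ (φ t) x).det ≠ 0)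
    (F : EuclideanSpace ℝ (Fin N) → ℝ) :
    ∫ x in Ω, |cocycle h φ t x| ^ p * F (φ t x) * ρ x
      = ∫ y in Ω, F y * rhotp Ω h φ φinv ρ p t y := by
  have hms := hΩ.measurableSet
  have himg : MeasurableSet (φ t '' Ω) :=
    hms.image_of_continuousOn_injOn hC1.continuousOn hinj
  have hsub : φ t '' Ω ⊆ Ω := Set.image_subset_iff.2 hmaps
  have hderiv : ∀ x ∈ Ω, HasFDerivWithinAt (φ t) (fderiv ℝ (φ t) x) Ω x := fun x hx =>
    (((hC1.differentiableOn one_ne_zero).differentiableAt (hΩ.mem_nhds hx)).hasFDerivAt).hasFDerivWithinAt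
  have step1 : ∫ y in Ω, F y * rhotp Ω h φ φinv ρ p t y
      = ∫ y in Ω, (φ t '' Ω).indicator
          (fun y => F y * (|cocycle h φ t (φinv t y)| ^ p * ρ (φinv t y)
            * |(fderiv ℝ (φinv t) y).det|)) y := by
    refine integral_congr_ae (Filter.Eventually.of_forall fun y => ?_)
    unfold rhotp
    by_cases hy : y ∈ φ t '' Ω <;>
      simp [Set.indicator_of_mem, Set.indicator_of_notMem, hy]
  have step2 : ∫ y in Ω, (φ t '' Ω).indicator
          (fun y => F y * (|cocycle h φ t (φinv t y)| ^ p * ρ (φinv t y)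
            * |(fderiv ℝ (φinv t) y).det|)) y
      = ∫ y in φ t '' Ω, F y * (|cocycle h φ t (φinv t y)| ^ p * ρ (φinv t y)
            * |(fderiv ℝ (φinv t) y).det|) := by
    rw [setIntegral_indicator himg, Set.inter_eq_self_of_subset_right hsub]
  have step3 : ∫ y in φ t '' Ω, F y * (|cocycle h φ t (φinv t y)| ^ p * ρ (φinv t y)
            * |(fderiv ℝ (φinv t) y).det|)
      = ∫ x in Ω, |(fderiv ℝ (φ t) x).det| •
          (F (φ t x) * (|cocycle h φ t (φinv t (φ t x))| ^ p * ρ (φinv t (φ t x))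
            * |(fderiv ℝ (φinv t) (φ t x)).det|)) :=
    integral_image_eq_integral_abs_det_fderiv_smul volume hms hderiv hinj _
  rw [step1, step2, step3]
  refine integral_congr_ae ?_
  filter_upwards [hdetae, ae_restrict_mem hms] with x hdet hx
  rw [hinvt x hx, det_fderiv_inv hΩ hC1 hinvt hx hdet, smul_eq_mul]
  have habs : |(fderiv ℝ (φ t) x).det| ≠ 0 := abs_ne_zero.2 hdet
  field_simp

/-- The weighted composition semigroup T on L^p_ρ(Ω) is stable iff ρ_{t,p}/ρ → 0 in the
weak-* topology induced by L¹(ρ dλ); equivalently ∫_Ω |g| ρ_{t,p} dλ → 0 for all g ∈ L¹_ρ(Ω). -/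
theorem stmt5 {N : ℕ} (Ω : Set (EuclideanSpace ℝ (Fin N))) (hΩ : IsOpen Ω)
    (p : ℝ) (hp : 1 ≤ p)
    (φ φinv : ℝ → EuclideanSpace ℝ (Fin N) → EuclideanSpace ℝ (Fin N))
    (h : EuclideanSpace ℝ (Fin N) → ℝ) (hh : ContinuousOn h Ω)
    (ρ : EuclideanSpace ℝ (Fin N) → ℝ) (hρpos : ∀ x ∈ Ω, 0 < ρ x)
    (hρmeas : Measurable ρ)
    (hρloc : ∀ K : Set (EuclideanSpace ℝ (Fin N)), K ⊆ Ω → IsCompact K → IntegrableOn ρ K)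
    (hφ0 : ∀ x ∈ Ω, φ 0 x = x)
    (hφmaps : ∀ t : ℝ, 0 ≤ t → ∀ x ∈ Ω, φ t x ∈ Ω)
    (hφsemi : ∀ s t : ℝ, 0 ≤ s → 0 ≤ t → ∀ x ∈ Ω, φ (s + t) x = φ s (φ t x))
    (hφinj : ∀ t : ℝ, 0 ≤ t → Set.InjOn (φ t) Ω)
    (hφC1 : ∀ t : ℝ, 0 ≤ t → ContDiffOn ℝ 1 (φ t) Ω)
    (hφcont : ContinuousOn (fun q : ℝ × EuclideanSpace ℝ (Fin N) => φ q.1 q.2)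
      (Set.Ici 0 ×ˢ Ω))
    (hinv : ∀ t : ℝ, 0 ≤ t → ∀ x ∈ Ω, φinv t (φ t x) = x)
    (hadm : ∃ M ω : ℝ, 1 ≤ M ∧ ∀ t : ℝ, 0 ≤ t →
      ∀ᵐ x ∂(volume.restrict Ω),
        |cocycle h φ t x| ^ p * ρ x ≤
          M * Real.exp (ω * t) * ρ (φ t x) * |(fderiv ℝ (φ t) x).det|) :
    (∀ f : EuclideanSpace ℝ (Fin N) → ℝ, Measurable f →
        IntegrableOn (fun x => |f x| ^ p * ρ x) Ω →
        Tendsto (fun t => ∫ x in Ω, |cocycle h φ t x * f (φ t x)| ^ p * ρ x)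
          atTop (𝓝 0)) ↔
      (∀ g : EuclideanSpace ℝ (Fin N) → ℝ, Measurable g →
        IntegrableOn (fun x => |g x| * ρ x) Ω →
        Tendsto (fun t => ∫ x in Ω, |g x| * rhotp Ω h φ φinv ρ p t x) atTop (𝓝 0)) := by
  have hpne : p ≠ 0 := by linarith
  -- a.e. nonvanishing of the Jacobian determinant
  have hdetae : ∀ t : ℝ, 0 ≤ t →
      ∀ᵐ x ∂(volume.restrict Ω), (fderiv ℝ (φ t) x).det ≠ 0 := by
    obtain ⟨M, ω, hM, hbound⟩ := hadm
    intro t ht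
    filter_upwards [hbound t ht, ae_restrict_mem hΩ.measurableSet] with x hb hx
    intro h0
    have hpos : 0 < |cocycle h φ t x| ^ p * ρ x := by
      have h1 : 0 < |cocycle h φ t x| := abs_pos.2 (Real.exp_ne_zero _)
      exact mul_pos (Real.rpow_pos_of_pos h1 p) (hρpos x hx)
    rw [h0] at hb
    simp only [abs_zero, mul_zero] at hb
    linarith
  -- the change of variables identity, for every t ≥ 0 and every F
  have key : ∀ t : ℝ, 0 ≤ t → ∀ F : EuclideanSpace ℝ (Fin N) → ℝ,
      ∫ x in Ω, |cocycle h φ t x| ^ p * F (φ t x) * ρ x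
        = ∫ y in Ω, F y * rhotp Ω h φ φinv ρ p t y := fun t ht F =>
    cov hΩ (hφmaps t ht) (hφinj t ht) (hφC1 t ht) (hinv t ht) (hdetae t ht) F
  constructor
  · intro H g hg hgint
    set f : EuclideanSpace ℝ (Fin N) → ℝ := fun x => |g x| ^ p⁻¹ with hf
    have hfm : Measurable f :=
      (Real.continuous_rpow_const (by positivity)).measurable.comp hg.abs
    have habs : ∀ y, |f y| ^ p = |g y| := fun y => by
      rw [hf, abs_of_nonneg (Real.rpow_nonneg (abs_nonneg _) _),
        ← Real.rpow_mul (abs_nonneg _), inv_mul_cancel₀ hpne, Real.rpow_one]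
    have hfint : IntegrableOn (fun x => |f x| ^ p * ρ x) Ω := by
      have : (fun x => |f x| ^ p * ρ x) = fun x => |g x| * ρ x :=
        funext fun x => by rw [habs]
      rw [this]; exact hgint
    refine (H f hfm hfint).congr' ?_
    filter_upwards [eventually_ge_atTop (0:ℝ)] with t ht
    have e1 : ∫ x in Ω, |cocycle h φ t x * f (φ t x)| ^ p * ρ x
        = ∫ x in Ω, |cocycle h φ t x| ^ p * |g (φ t x)| * ρ x := by
      refine integral_congr_ae (Filter.Eventually.of_forall fun x => ?_)
      show |cocycle h φ t x * f (φ t x)| ^ p * ρ x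
        = |cocycle h φ t x| ^ p * |g (φ t x)| * ρ x
      rw [abs_mul, Real.mul_rpow (abs_nonneg _) (abs_nonneg _), habs]
    rw [e1, key t ht (fun y => |g y|)]
  · intro H f hf hfint
    set g : EuclideanSpace ℝ (Fin N) → ℝ := fun x => |f x| ^ p with hg
    have hgm : Measurable g :=
      (Real.continuous_rpow_const (by linarith)).measurable.comp hf.abs
    have habs : ∀ y, |g y| = |f y| ^ p := fun y => by
      rw [hg, abs_of_nonneg (Real.rpow_nonneg (abs_nonneg _) _)]
    have hgint : IntegrableOn (fun x => |g x| * ρ x) Ω := by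
      have : (fun x => |g x| * ρ x) = fun x => |f x| ^ p * ρ x :=
        funext fun x => by rw [habs]
      rw [this]; exact hfint
    refine (H g hgm hgint).congr' ?_
    filter_upwards [eventually_ge_atTop (0:ℝ)] with t ht
    have e1 : ∫ x in Ω, |cocycle h φ t x * f (φ t x)| ^ p * ρ x
        = ∫ x in Ω, |cocycle h φ t x| ^ p * |g (φ t x)| * ρ x := by
      refine integral_congr_ae (Filter.Eventually.of_forall fun x => ?_)
      show |cocycle h φ t x * f (φ t x)| ^ p * ρ x
        = |cocycle h φ t x| ^ p * |g (φ t x)| * ρ x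
      rw [abs_mul, Real.mul_rpow (abs_nonneg _) (abs_nonneg _), habs]
    rw [e1, key t ht (fun y => |g y|)]
end

section
/- Let h ∈ C[0,1] be such that x ↦ (h(x) − h(0))/x belongs to L¹(0,1), and let T_h be the von Foerster–Lasota semigroup (T_h(t)v)(x) = exp(∫_{−t}^0 h(x e^s) ds) v(x e^{−t}) on L^p(0,1), 1 ≤ p < ∞. Then T_h is stable on L^p(0,1) if and only if h(0) ≤ −1/p. -/
open MeasureTheory Filter Topology

lemma auxA (g : ℝ → ℝ) (hg : Continuous g) (t x : ℝ) (ht : 0 ≤ t) (hx : x ∈ Set.Ioo (0:ℝ) 1)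
    (hw : IntegrableOn (fun u => |(g u - g 0) / u|) (Set.Ioo 0 1)) :
    |(∫ s in (-t)..(0:ℝ), g (x * Real.exp s)) - g 0 * t|
      ≤ ∫ u in Set.Ioo (0:ℝ) 1, |(g u - g 0) / u| := by
  obtain ⟨hx0, hx1⟩ := hx
  set G : ℝ → ℝ := fun u => (g u - g 0) / u with hG
  have himg : ∀ u ∈ (fun s => x * Real.exp s) '' Set.uIcc (-t) 0, 0 < u := by
    rintro u ⟨s, _, rfl⟩; exact mul_pos hx0 (Real.exp_pos s)
  have hsub : (∫ s in (-t)..(0:ℝ), (x * Real.exp s) • (G ∘ (fun s => x * Real.exp s)) s)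
      = ∫ u in (x * Real.exp (-t))..(x * Real.exp 0), G u := by
    apply intervalIntegral.integral_comp_smul_deriv'
    · intro s _
      simpa using (Real.hasDerivAt_exp s).const_mul x
    · exact (continuous_const.mul Real.continuous_exp).continuousOn
    · exact (((hg.sub continuous_const).continuousOn).div continuousOn_id
        (fun v hv => ne_of_gt hv)).mono himg
  have heq1 : (∫ s in (-t)..(0:ℝ), (x * Real.exp s) • (G ∘ (fun s => x * Real.exp s)) s)
      = ∫ s in (-t)..(0:ℝ), (g (x * Real.exp s) - g 0) := by
    apply intervalIntegral.integral_congr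
    intro s _
    have : 0 < x * Real.exp s := mul_pos hx0 (Real.exp_pos s)
    simp only [Function.comp, hG, smul_eq_mul]
    field_simp
  have heq2 : (∫ s in (-t)..(0:ℝ), (g (x * Real.exp s) - g 0))
      = (∫ s in (-t)..(0:ℝ), g (x * Real.exp s)) - g 0 * t := by
    rw [intervalIntegral.integral_sub]
    · rw [intervalIntegral.integral_const]
      simp [smul_eq_mul]
      ring
    · exact (hg.comp (continuous_const.mul Real.continuous_exp)).intervalIntegrable _ _
    · exact intervalIntegrable_const
  have key : (∫ s in (-t)..(0:ℝ), g (x * Real.exp s)) - g 0 * t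
      = ∫ u in (x * Real.exp (-t))..x, G u := by
    rw [← heq2, ← heq1, hsub, Real.exp_zero, mul_one]
  rw [key]
  have hab : x * Real.exp (-t) ≤ x := by
    nlinarith [Real.exp_le_one_iff.mpr (neg_nonpos.mpr ht), Real.exp_pos (-t)]
  calc |∫ u in (x * Real.exp (-t))..x, G u|
      ≤ ∫ u in (x * Real.exp (-t))..x, |G u| :=
        intervalIntegral.abs_integral_le_integral_abs hab
    _ = ∫ u in Set.Ioc (x * Real.exp (-t)) x, |G u| := intervalIntegral.integral_of_le hab
    _ ≤ ∫ u in Set.Ioo (0:ℝ) 1, |G u| := by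
        apply setIntegral_mono_set hw
        · exact Filter.Eventually.of_forall fun u => abs_nonneg _
        · apply HasSubset.Subset.eventuallyLE
          intro u hu
          exact ⟨lt_of_lt_of_le (mul_pos hx0 (Real.exp_pos _)) hu.1.le, lt_of_le_of_lt hu.2 hx1⟩

/-- Stability of the von Foerster–Lasota semigroup
(T_h(t)v)(x) = exp(∫_{−t}^0 h(xe^s) ds) v(xe^{−t}) on L^p(0,1):
if (h(x)−h(0))/x ∈ L¹(0,1), then T_h is stable iff h(0) ≤ −1/p. -/
theorem stmt12 (p : ℝ) (hp : 1 ≤ p) (h : ℝ → ℝ) (hh : ContinuousOn h (Set.Icc 0 1))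
    (hint : IntegrableOn (fun x => (h x - h 0) / x) (Set.Ioo 0 1)) :
    (∀ v : ℝ → ℝ, Measurable v → IntegrableOn (fun x => |v x| ^ p) (Set.Ioo 0 1) →
        Tendsto (fun t => ∫ x in Set.Ioo (0:ℝ) 1,
            |Real.exp (∫ s in (-t)..(0:ℝ), h (x * Real.exp s)) * v (x * Real.exp (-t))| ^ p)
          atTop (𝓝 0)) ↔
      h 0 ≤ -(1 / p) := by
  have hp0 : (0:ℝ) < p := lt_of_lt_of_le one_pos hp
  set g : ℝ → ℝ := fun x => h (min 1 (max 0 x)) with hgdef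
  have hgc : Continuous g := by
    apply hh.comp_continuous (continuous_const.min (continuous_const.max continuous_id))
    intro x
    exact ⟨le_min zero_le_one (le_max_left 0 x), min_le_left _ _⟩
  have hg_eq : ∀ u ∈ Set.Icc (0:ℝ) 1, g u = h u := by
    intro u hu
    have : min 1 (max 0 u) = u := by rw [max_eq_right hu.1]; exact min_eq_right hu.2
    rw [hgdef]; simp only [this]
  have hg0 : g 0 = h 0 := hg_eq 0 ⟨le_refl 0, zero_le_one⟩
  have habs : IntegrableOn (fun u => |(g u - g 0) / u|) (Set.Ioo 0 1) := by
    apply IntegrableOn.congr_fun hint.abs _ measurableSet_Ioo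
    intro u hu
    dsimp only
    rw [hg_eq u ⟨hu.1.le, hu.2.le⟩, hg0]
  set M := ∫ u in Set.Ioo (0:ℝ) 1, |(g u - g 0) / u| with hMdef
  have hMA : ∀ t : ℝ, 0 ≤ t → ∀ x ∈ Set.Ioo (0:ℝ) 1,
      |(∫ s in (-t)..(0:ℝ), g (x * Real.exp s)) - h 0 * t| ≤ M := by
    intro t ht x hx
    rw [← hg0]
    exact auxA g hgc t x ht hx habs
  have hΦc : ∀ t : ℝ, Continuous fun x => ∫ s in (-t)..(0:ℝ), g (x * Real.exp s) := by
    intro t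
    apply intervalIntegral.continuous_parametric_intervalIntegral_of_continuous'
      (f := fun x s => g (x * Real.exp s))
    exact hgc.comp (continuous_fst.mul (Real.continuous_exp.comp continuous_snd))
  -- rewrite the integrand for t ≥ 0
  have hIeq : ∀ (v : ℝ → ℝ) (t : ℝ), 0 ≤ t →
      (∫ x in Set.Ioo (0:ℝ) 1,
          |Real.exp (∫ s in (-t)..(0:ℝ), h (x * Real.exp s)) * v (x * Real.exp (-t))| ^ p)
      = ∫ x in Set.Ioo (0:ℝ) 1,
          Real.exp (p * ∫ s in (-t)..(0:ℝ), g (x * Real.exp s)) * |v (x * Real.exp (-t))| ^ p := by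
    intro v t ht
    apply setIntegral_congr_fun measurableSet_Ioo
    intro x hx
    have hA : (∫ s in (-t)..(0:ℝ), h (x * Real.exp s))
        = ∫ s in (-t)..(0:ℝ), g (x * Real.exp s) := by
      apply intervalIntegral.integral_congr
      intro s hs
      rw [Set.uIcc_of_le (neg_nonpos.mpr ht)] at hs
      have h1 : Real.exp s ≤ 1 := Real.exp_le_one_iff.mpr hs.2
      have h2 : 0 < Real.exp s := Real.exp_pos s
      have : x * Real.exp s ∈ Set.Icc (0:ℝ) 1 := by
        constructor
        · exact mul_nonneg hx.1.le h2.le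
        · nlinarith [hx.1, hx.2]
      exact (hg_eq _ this).symm
    dsimp only
    rw [hA, abs_mul, Real.abs_exp,
      Real.mul_rpow (Real.exp_pos _).le (abs_nonneg _), mul_comm p, Real.exp_mul]
  have hWnonneg : ∀ (v : ℝ → ℝ) (y : ℝ), 0 ≤ |v y| ^ p := fun v y => Real.rpow_nonneg (abs_nonneg _) p
  have hexp_le : ∀ t : ℝ, 0 ≤ t → ∀ x ∈ Set.Ioo (0:ℝ) 1,
      Real.exp (p * ∫ s in (-t)..(0:ℝ), g (x * Real.exp s)) ≤ Real.exp (p * (h 0 * t + M)) := by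
    intro t ht x hx
    have hb := abs_le.1 (hMA t ht x hx)
    exact Real.exp_le_exp.2 (mul_le_mul_of_nonneg_left (by linarith [hb.2]) hp0.le)
  have hexp_ge : ∀ t : ℝ, 0 ≤ t → ∀ x ∈ Set.Ioo (0:ℝ) 1,
      Real.exp (p * (h 0 * t - M)) ≤ Real.exp (p * ∫ s in (-t)..(0:ℝ), g (x * Real.exp s)) := by
    intro t ht x hx
    have hb := abs_le.1 (hMA t ht x hx)
    exact Real.exp_le_exp.2 (mul_le_mul_of_nonneg_left (by linarith [hb.1]) hp0.le)
  have hcomp_int : ∀ (v : ℝ → ℝ), IntegrableOn (fun y => |v y| ^ p) (Set.Ioo 0 1) →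
      ∀ t : ℝ, 0 ≤ t → IntegrableOn (fun x => |v (x * Real.exp (-t))| ^ p) (Set.Ioo 0 1) := by
    intro v hvint t ht
    have hc0 : 0 < Real.exp (-t) := Real.exp_pos _
    have hc1 : Real.exp (-t) ≤ 1 := Real.exp_le_one_iff.mpr (neg_nonpos.mpr ht)
    have hIcc : IntegrableOn (fun y => |v y| ^ p) (Set.Icc 0 1) :=
      hvint.congr_set_ae Ioo_ae_eq_Icc.symm
    have hII : IntervalIntegrable (fun y => |v y| ^ p) volume 0 (Real.exp (-t)) :=
      (intervalIntegrable_iff_integrableOn_Ioc_of_le hc0.le).2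
        (hIcc.mono_set (Set.Ioc_subset_Icc_self.trans (Set.Icc_subset_Icc le_rfl hc1)))
    have hII2 := hII.comp_mul_right (c := Real.exp (-t))
    rw [zero_div, div_self hc0.ne'] at hII2
    exact ((intervalIntegrable_iff_integrableOn_Ioc_of_le zero_le_one).1 hII2).mono_set
      Set.Ioo_subset_Ioc_self
  have hmain_int : ∀ (v : ℝ → ℝ), Measurable v → IntegrableOn (fun y => |v y| ^ p) (Set.Ioo 0 1) →
      ∀ t : ℝ, 0 ≤ t → IntegrableOn
        (fun x => Real.exp (p * ∫ s in (-t)..(0:ℝ), g (x * Real.exp s))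
          * |v (x * Real.exp (-t))| ^ p) (Set.Ioo 0 1) := by
    intro v hv hvint t ht
    apply Integrable.mono' ((hcomp_int v hvint t ht).const_mul (Real.exp (p * (h 0 * t + M))))
    · exact ((Real.continuous_exp.comp (continuous_const.mul (hΦc t))).measurable.mul
        ((hv.comp (measurable_id.mul_const _)).abs.pow_const p)).aestronglyMeasurable
    · rw [ae_restrict_iff' measurableSet_Ioo]
      filter_upwards with x
      intro hx
      rw [Real.norm_eq_abs, abs_of_nonneg (mul_nonneg (Real.exp_pos _).le (hWnonneg v _))]
      exact mul_le_mul_of_nonneg_right (hexp_le t ht x hx) (hWnonneg v _)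
  constructor
  · intro hst
    by_contra hcon
    push_neg at hcon
    set α : ℝ := (1 / p - h 0) / 2 with hα
    set r : ℝ := -(α * p) with hrdef
    have hα1 : -h 0 < α := by rw [hα]; linarith
    have hα2 : α < 1 / p := by rw [hα]; linarith
    have hr : -1 < r := by
      rw [hrdef]
      have h5 : α * p < (1 / p) * p := mul_lt_mul_of_pos_right hα2 hp0
      rw [one_div, inv_mul_cancel₀ hp0.ne'] at h5
      linarith
    have hr1 : (0:ℝ) < r + 1 := by linarith
    set v : ℝ → ℝ := fun y => |y| ^ (-α) with hvdef
    have hvm : Measurable v := measurable_id.abs.pow_const _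
    have hveq : ∀ y : ℝ, 0 < y → |v y| ^ p = y ^ r := by
      intro y hy
      rw [hvdef]
      dsimp only
      rw [abs_of_nonneg hy.le, abs_of_nonneg (Real.rpow_nonneg hy.le _),
        ← Real.rpow_mul hy.le]
      congr 1
      rw [hrdef]; ring
    have hrint : IntegrableOn (fun x : ℝ => x ^ r) (Set.Ioo 0 1) :=
      ((intervalIntegrable_iff_integrableOn_Ioc_of_le zero_le_one).1
        (intervalIntegral.intervalIntegrable_rpow' hr)).mono_set Set.Ioo_subset_Ioc_self
    have hvint : IntegrableOn (fun y => |v y| ^ p) (Set.Ioo 0 1) := by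
      apply hrint.congr_fun _ measurableSet_Ioo
      intro y hy
      exact (hveq y hy.1).symm
    have htd := hst v hvm hvint
    have hC0 : (0:ℝ) < Real.exp (-(p * M)) * (1 / (r + 1)) := by positivity
    have hval : (∫ x in Set.Ioo (0:ℝ) 1, x ^ r) = 1 / (r + 1) := by
      rw [← integral_Ioc_eq_integral_Ioo, ← intervalIntegral.integral_of_le zero_le_one,
        integral_rpow (Or.inl hr), Real.one_rpow, Real.zero_rpow (ne_of_gt hr1), sub_zero]
    have hlow : ∀ t : ℝ, 0 ≤ t → Real.exp (-(p * M)) * (1 / (r + 1))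
        ≤ ∫ x in Set.Ioo (0:ℝ) 1,
            |Real.exp (∫ s in (-t)..(0:ℝ), h (x * Real.exp s)) * v (x * Real.exp (-t))| ^ p := by
      intro t ht
      rw [hIeq v t ht]
      have hc0 : (0:ℝ) < Real.exp (-t) := Real.exp_pos _
      have step1 : (∫ x in Set.Ioo (0:ℝ) 1,
            Real.exp (p * (h 0 * t - M)) * (x ^ r * Real.exp (-t) ^ r))
          ≤ ∫ x in Set.Ioo (0:ℝ) 1,
            Real.exp (p * ∫ s in (-t)..(0:ℝ), g (x * Real.exp s))
              * |v (x * Real.exp (-t))| ^ p := by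
        apply setIntegral_mono_on (((hrint.mul_const _).const_mul _))
          (hmain_int v hvm hvint t ht) measurableSet_Ioo
        intro x hx
        have hWc : |v (x * Real.exp (-t))| ^ p = x ^ r * Real.exp (-t) ^ r := by
          rw [hveq _ (mul_pos hx.1 hc0), Real.mul_rpow hx.1.le hc0.le]
        rw [hWc]
        apply mul_le_mul_of_nonneg_right (hexp_ge t ht x hx)
        have : (0:ℝ) ≤ x ^ r := Real.rpow_nonneg hx.1.le r
        positivity
      have step2 : (∫ x in Set.Ioo (0:ℝ) 1,
            Real.exp (p * (h 0 * t - M)) * (x ^ r * Real.exp (-t) ^ r))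
          = Real.exp (p * (h 0 * t - M)) * (1 / (r + 1) * Real.exp (-t) ^ r) := by
        rw [integral_const_mul]
        congr 1
        rw [integral_mul_const, hval]
      have step3 : Real.exp (-(p * M)) * (1 / (r + 1))
          ≤ Real.exp (p * (h 0 * t - M)) * (1 / (r + 1) * Real.exp (-t) ^ r) := by
        have hE : Real.exp (p * (h 0 * t - M)) * (1 / (r + 1) * Real.exp (-t) ^ r)
            = Real.exp (p * (h 0 * t - M) + -t * r) * (1 / (r + 1)) := by
          rw [← Real.exp_mul, Real.exp_add]; ring
        rw [hE]
        apply mul_le_mul_of_nonneg_right _ (by positivity)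
        apply Real.exp_le_exp.2
        have hpos : 0 ≤ (p * (h 0 + α)) * t :=
          mul_nonneg (mul_nonneg hp0.le (by linarith)) ht
        have : p * (h 0 * t - M) + -t * r = -(p * M) + (p * (h 0 + α)) * t := by
          rw [hrdef]; ring
        linarith
      linarith
    obtain ⟨t, h1, h2⟩ := ((htd.eventually_lt_const hC0).and (eventually_ge_atTop (0:ℝ))).exists
    exact absurd (hlow t h2) (not_le.mpr h1)
  · intro hle v hv hvint
    have hph : p * h 0 + 1 ≤ 0 := by
      have := mul_le_mul_of_nonneg_left hle hp0.le
      rw [mul_neg, mul_one_div, div_self hp0.ne'] at this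
      linarith
    have hIcc : IntegrableOn (fun y => |v y| ^ p) (Set.Icc 0 1) :=
      hvint.congr_set_ae Ioo_ae_eq_Icc.symm
    set G : ℝ → ℝ := fun e => ∫ u in Set.Ioc 0 e, |v u| ^ p with hGdef
    have hGnonneg : ∀ e, 0 ≤ G e :=
      fun e => setIntegral_nonneg measurableSet_Ioc fun y _ => hWnonneg v y
    have hGlim : Tendsto (fun t => Real.exp (p * M) * G (Real.exp (-t))) atTop (𝓝 0) := by
      have h1 : Tendsto (fun t : ℝ => Real.exp (-t)) atTop (𝓝[Set.Icc (0:ℝ) 1] 0) := by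
        apply tendsto_nhdsWithin_of_tendsto_nhds_of_eventually_within
        · exact Real.tendsto_exp_atBot.comp tendsto_neg_atTop_atBot
        · filter_upwards [eventually_ge_atTop (0:ℝ)] with t ht
          exact ⟨(Real.exp_pos _).le, Real.exp_le_one_iff.mpr (neg_nonpos.mpr ht)⟩
      have h2 : Tendsto G (𝓝[Set.Icc (0:ℝ) 1] 0) (𝓝 0) := by
        have h3 := (intervalIntegral.continuousOn_primitive hIcc) 0 ⟨le_refl 0, zero_le_one⟩
        simpa only [ContinuousWithinAt, Set.Ioc_self, Measure.restrict_empty,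
          integral_zero_measure] using h3
      have := (h2.comp h1).const_mul (Real.exp (p * M))
      simpa using this
    apply squeeze_zero'
      (Filter.Eventually.of_forall fun t => setIntegral_nonneg measurableSet_Ioo
        fun x _ => hWnonneg _ _) _ hGlim
    filter_upwards [eventually_ge_atTop (0:ℝ)] with t ht
    rw [hIeq v t ht]
    have hc0 : 0 < Real.exp (-t) := Real.exp_pos _
    have step1 : (∫ x in Set.Ioo (0:ℝ) 1,
          Real.exp (p * ∫ s in (-t)..(0:ℝ), g (x * Real.exp s)) * |v (x * Real.exp (-t))| ^ p)
        ≤ ∫ x in Set.Ioo (0:ℝ) 1,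
          Real.exp (p * (h 0 * t + M)) * |v (x * Real.exp (-t))| ^ p := by
      apply setIntegral_mono_on (hmain_int v hv hvint t ht)
        ((hcomp_int v hvint t ht).const_mul _) measurableSet_Ioo
      intro x hx
      exact mul_le_mul_of_nonneg_right (hexp_le t ht x hx) (hWnonneg v _)
    have step2 : (∫ x in Set.Ioo (0:ℝ) 1,
          Real.exp (p * (h 0 * t + M)) * |v (x * Real.exp (-t))| ^ p)
        = Real.exp (p * (h 0 * t + M)) * ((Real.exp (-t))⁻¹ * G (Real.exp (-t))) := by
      rw [integral_const_mul]
      congr 1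
      rw [← integral_Ioc_eq_integral_Ioo, ← intervalIntegral.integral_of_le zero_le_one,
        intervalIntegral.integral_comp_mul_right (fun y => |v y| ^ p) hc0.ne', smul_eq_mul,
        zero_mul, one_mul, intervalIntegral.integral_of_le hc0.le]
    have step3 : Real.exp (p * (h 0 * t + M)) * ((Real.exp (-t))⁻¹ * G (Real.exp (-t)))
        ≤ Real.exp (p * M) * G (Real.exp (-t)) := by
      rw [← Real.exp_neg]
      rw [← mul_assoc, ← Real.exp_add]
      have heq : p * (h 0 * t + M) + - -t = p * M + (p * h 0 + 1) * t := by ring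
      rw [heq, Real.exp_add, mul_assoc]
      apply mul_le_mul_of_nonneg_left _ (Real.exp_pos _).le
      have : Real.exp ((p * h 0 + 1) * t) ≤ 1 :=
        Real.exp_le_one_iff.mpr (mul_nonpos_of_nonpos_of_nonneg hph ht)
      nlinarith [hGnonneg (Real.exp (-t))]
    linarith
end
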